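/- arXiv:2307.08998 — 3 statements merged into one kernel-verified Lean document; each statement's English description precedes it below -/
import Mathlib

section
/- For all i ≥ 0 and k ≥ 2, P_{2i+3}(u)·P_k(u) − u·P_{2i+k+1}(u) = P_{2i+1}(u)·P_{k-2}(u). -/
def pell (u : ℕ) : ℕ → ℕ
  | 0 => 0
  | 1 => 1
  | n + 2 => u * pell u (n + 1) + pell u n

lemma pell_add (u : ℕ) : ∀ n m : ℕ,
    pell u (m + n + 1) = pell u (m + 1) * pell u (n + 1) + pell u m * pell u n := by
  intro n
  induction n using Nat.twoStepInduction with
  | zero => intro m; simp [pell]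
  | one => intro m; simp [pell]; ring
  | more n ih1 ih2 =>
    intro m
    have h : m + (n + 2) + 1 = (m + n + 1) + 2 := by ring
    rw [h, pell, show m + n + 1 + 1 = m + (n+1) + 1 by ring, ih1, ih2,
      show pell u (n + 2 + 1) = u * pell u (n + 2) + pell u (n+1) from rfl,
      show pell u (n + 2) = u * pell u (n + 1) + pell u n from rfl]
    ring

theorem stmt_5 (u : ℕ) (hu : 1 ≤ u) (i k : ℕ) (hk : 2 ≤ k) :
    (pell u (2 * i + 3) * pell u k : ℤ) - u * pell u (2 * i + k + 1) =
      pell u (2 * i + 1) * pell u (k - 2) := by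
  obtain ⟨j, rfl⟩ : ∃ j, k = j + 2 := ⟨k - 2, by omega⟩
  have h1 : 2 * i + (j + 2) + 1 = (2 * i + 2) + j + 1 := by ring
  rw [h1, pell_add u j (2 * i + 2)]
  have h2 : pell u (2 * i + 3) = u * pell u (2 * i + 2) + pell u (2 * i + 1) := rfl
  have h3 : pell u (j + 2) = u * pell u (j + 1) + pell u j := rfl
  simp only [show j + 2 - 2 = j from rfl, show 2*i+2+1 = 2*i+3 from rfl, h2, h3]
  push_cast
  ring
end

section
/- Let u ≥ 2 and 2 ≤ i ≤ k. For integers ℓ, ℓ' with 0 ≤ ℓ, ℓ' < P_{2i}(u)/u and any fixed z, if ℓ·P_{2i+2}(u) + z·P_{2i+2k+1}(u) ≡ ℓ'·P_{2i+2}(u) + z·P_{2i+2k+1}(u) (mod P_{2i}(u)), then ℓ = ℓ'. -/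
lemma pell_even_dvd (u : ℕ) : ∀ i, u ∣ pell u (2 * i)
  | 0 => by simp [pell]
  | i + 1 => by
      have : 2 * (i + 1) = 2 * i + 2 := by ring
      rw [this, pell]
      exact Dvd.dvd.add (Dvd.intro _ rfl) (pell_even_dvd u i)

lemma pell_coprime (u : ℕ) : ∀ n, Nat.Coprime (pell u n) (pell u (n + 1))
  | 0 => by simp [pell, Nat.Coprime]
  | n + 1 => by
      have h := pell_coprime u n
      show Nat.Coprime (pell u (n + 1)) (u * pell u (n + 1) + pell u n)
      have e : u * pell u (n + 1) + pell u n = pell u n + pell u (n + 1) * u := by ring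
      rw [e, Nat.coprime_add_mul_left_right]
      exact h.symm

lemma modeq_mul_cancel {a b c n : ℕ} (hc : 0 < c) (h : c * a ≡ c * b [MOD c * n]) :
    a ≡ b [MOD n] := by
  have h' := (Nat.modEq_iff_dvd).mp h
  rw [Nat.modEq_iff_dvd]
  push_cast at h' ⊢
  rw [← mul_sub] at h'
  exact (mul_dvd_mul_iff_left (by exact_mod_cast hc.ne' : (c:ℤ) ≠ 0)).mp h'

theorem stmt_10 (u : ℕ) (hu : 2 ≤ u) (i k : ℕ) (hi : 2 ≤ i) (hik : i ≤ k)
    (l l' z : ℕ) (hl : l < pell u (2 * i) / u) (hl' : l' < pell u (2 * i) / u)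
    (hcong : l * pell u (2 * i + 2) + z * pell u (2 * i + 2 * k + 1) ≡
      l' * pell u (2 * i + 2) + z * pell u (2 * i + 2 * k + 1) [MOD pell u (2 * i)]) :
    l = l' := by
  have hu0 : 0 < u := by omega
  set m := pell u (2 * i) with hm
  obtain ⟨m', hm'⟩ := pell_even_dvd u i
  -- q = pell u (2*i - 1)
  obtain ⟨j, rfl⟩ : ∃ j, i = j + 1 := ⟨i - 1, by omega⟩
  have h2i : 2 * (j + 1) = 2 * j + 1 + 1 := by ring
  set q := pell u (2 * j + 1) with hq
  have hmq : m = u * q + pell u (2 * j) := by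
    rw [hm, h2i]; rfl
  have hA : pell u (2 * (j + 1) + 2) = (u * u + 1) * m + u * q := by
    have e1 : 2 * (j + 1) + 2 = (2 * (j + 1)) + 2 := rfl
    rw [e1, pell]
    have e2 : 2 * (j + 1) + 1 = (2 * j + 1) + 2 := by ring
    have : pell u (2 * (j + 1) + 1) = u * m + q := by
      rw [e2, pell]
      have e3 : 2 * j + 1 + 1 = 2 * (j + 1) := by ring
      rw [e3, ← hm, ← hq]
    rw [this]; ring
  -- cancel the z term
  have h1 : l * pell u (2 * (j + 1) + 2) ≡ l' * pell u (2 * (j + 1) + 2) [MOD m] :=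
    Nat.ModEq.add_right_cancel' _ hcong
  rw [hA] at h1
  have h2 : l * (u * q) ≡ l' * (u * q) [MOD m] := by
    have hL : ∀ x : ℕ, x * ((u * u + 1) * m + u * q) = x * (u * q) + (x * (u * u + 1)) * m := by
      intro x; ring
    rw [hL l, hL l'] at h1
    have fac : ∀ x c : ℕ, x + c * m ≡ x [MOD m] := by
      intro x c; simp [Nat.ModEq, Nat.add_mul_mod_self_right]
    calc l * (u * q) ≡ l * (u * q) + (l * (u * u + 1)) * m [MOD m] := (fac _ _).symm
      _ ≡ l' * (u * q) + (l' * (u * u + 1)) * m [MOD m] := h1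
      _ ≡ l' * (u * q) [MOD m] := fac _ _
  have hmdiv : m / u = m' := by rw [hm, hm']; exact Nat.mul_div_cancel_left _ hu0
  rw [hmdiv] at hl hl'
  -- divide by u
  have h3 : l * q ≡ l' * q [MOD m'] := by
    apply modeq_mul_cancel hu0
    have e : ∀ x : ℕ, u * (x * q) = x * (u * q) := by intro x; ring
    rw [e, e, ← hm']
    exact h2
  -- cancel q, coprime to m'
  have hcop : Nat.Coprime q m' := by
    have h4 : Nat.Coprime q m := by
      have := pell_coprime u (2 * j + 1)
      rw [← h2i, ← hm, ← hq] at this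
      exact this
    exact h4.coprime_dvd_right ⟨u, by rw [hm, hm']; ring⟩
  have h5 : l ≡ l' [MOD m'] := by
    have := Nat.ModEq.cancel_right_of_coprime (c := q) (by simpa [Nat.Coprime, Nat.gcd_comm] using hcop) h3
    exact this
  exact h5.eq_of_lt_of_lt hl hl'
end

section
/- Let k ≥ 4 be even and k < 2i+1. Then (P_k(u)/u)·P_{2i+3}(u) − P_{2i+k+1}(u) = (P_{k-2}(u)/u)·P_{2i+1}(u) > 0, where P_k(u)/u and P_{k-2}(u)/u are integers. -/
lemma pell_pos (u : ℕ) (hu : 1 ≤ u) : ∀ n, 0 < pell u (n + 1) := by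
  intro n
  induction n using Nat.twoStepInduction with
  | zero => simp [pell]
  | one => simp [pell]; positivity
  | more n ih1 ih2 =>
    show 0 < u * pell u (n + 2) + pell u (n + 1)
    positivity

lemma pell_dvd_even (u : ℕ) : ∀ m, u ∣ pell u (2 * m) := by
  intro m
  induction m with
  | zero => simp [pell]
  | succ m ih =>
    have : 2 * (m + 1) = 2 * m + 2 := by ring
    rw [this]
    show u ∣ u * pell u (2 * m + 1) + pell u (2 * m)
    exact Dvd.dvd.add (Dvd.intro _ rfl) ih

lemma pell_key (u j : ℕ) : ∀ n,
    pell u (j + 2) * pell u (n + 2) = u * pell u (n + j + 2) + pell u j * pell u n := by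
  intro n
  induction n using Nat.twoStepInduction with
  | zero => simp [pell, Nat.mul_comm]
  | one =>
    have h1 : pell u (j + 3) = u * pell u (j + 2) + pell u (j + 1) := rfl
    have h2 : pell u (j + 2) = u * pell u (j + 1) + pell u j := rfl
    have h3 : pell u 3 = u * (u * 1 + 0) + 1 := rfl
    have h4 : pell u 1 = 1 := rfl
    rw [show (1:ℕ) + 2 = 3 from rfl, show 1 + j + 2 = j + 3 from by ring, h3, h1, h2, h4]
    ring
  | more n ih1 ih2 =>
    simp only [show n + 1 + 2 = n + 3 from by ring, show n + 1 + j + 2 = n + j + 3 from by ring]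
      at ih2
    have e1 : pell u (n + 4) = u * pell u (n + 3) + pell u (n + 2) := rfl
    have e2 : pell u (n + j + 4) = u * pell u (n + j + 3) + pell u (n + j + 2) := rfl
    have e3 : pell u (n + 2) = u * pell u (n + 1) + pell u n := rfl
    rw [show n + 2 + 2 = n + 4 from by ring, show n + 2 + j + 2 = n + j + 4 from by ring,
      e1, e2, Nat.mul_add, Nat.mul_left_comm, ih2, ih1, e3]
    ring

theorem stmt_17 (u : ℕ) (hu : 1 ≤ u) (i k : ℕ) (hk4 : 4 ≤ k) (hkeven : Even k)
    (hk : k < 2 * i + 1) :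
    u ∣ pell u k ∧ u ∣ pell u (k - 2) ∧
      ((pell u k / u : ℕ) : ℤ) * pell u (2 * i + 3) - pell u (2 * i + k + 1)
        = ((pell u (k - 2) / u : ℕ) : ℤ) * pell u (2 * i + 1) ∧
      0 < ((pell u k / u : ℕ) : ℤ) * pell u (2 * i + 3) - pell u (2 * i + k + 1) := by
  obtain ⟨m, hm⟩ := hkeven
  have hmk : k = 2 * m := by omega
  have hmk2 : k - 2 = 2 * (m - 1) := by omega
  have hdvd1 : u ∣ pell u k := hmk ▸ pell_dvd_even u m
  have hdvd2 : u ∣ pell u (k - 2) := hmk2 ▸ pell_dvd_even u (m - 1)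
  refine ⟨hdvd1, hdvd2, ?_⟩
  have hA : u * (pell u k / u) = pell u k := Nat.mul_div_cancel' hdvd1
  have hB : u * (pell u (k - 2) / u) = pell u (k - 2) := Nat.mul_div_cancel' hdvd2
  have key := pell_key u (k - 2) (2 * i + 1)
  have hk2 : k - 2 + 2 = k := by omega
  have hk3 : 2 * i + 1 + (k - 2) + 2 = 2 * i + k + 1 := by omega
  rw [hk2, hk3] at key
  -- key : pell u k * pell u (2i+3) = u * pell u (2i+k+1) + pell u (k-2) * pell u (2i+1)
  rw [← hA, ← hB] at key
  have hu0 : 0 < u := hu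
  have cancel : pell u k / u * pell u (2 * i + 3)
      = pell u (2 * i + k + 1) + pell u (k - 2) / u * pell u (2 * i + 1) := by
    apply Nat.eq_of_mul_eq_mul_left hu0
    rw [Nat.mul_add, ← Nat.mul_assoc, ← Nat.mul_assoc, key]
  have cancelZ : ((pell u k / u : ℕ) : ℤ) * pell u (2 * i + 3)
      = (pell u (2 * i + k + 1) : ℤ) + ((pell u (k - 2) / u : ℕ) : ℤ) * pell u (2 * i + 1) := by
    exact_mod_cast congrArg (Nat.cast : ℕ → ℤ) cancel
  constructor
  · omega
  · have hBpos : 0 < pell u (k - 2) / u := by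
      have h1 : 0 < pell u (k - 2) := by
        have : k - 2 = (k - 3) + 1 := by omega
        rw [this]; exact pell_pos u hu _
      rcases Nat.eq_zero_or_pos (pell u (k - 2) / u) with h | h
      · rw [h, Nat.mul_zero] at hB; omega
      · exact h
    have hPpos : 0 < pell u (2 * i + 1) := pell_pos u hu _
    have : (0 : ℤ) < ((pell u (k - 2) / u : ℕ) : ℤ) * pell u (2 * i + 1) := by
      positivity
    omega
end
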